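/- For the equalizing weights problem: if the a_j defined by a_j = (1 + (σ²/P)(Σ_{l∈B} 1/μ_l − (1/h_j²)Σ_{l∈B} h_l²/μ_l)) / ((μ_j/h_j²)Σ_{l∈B} h_l²/μ_l) are all nonnegative, then they constitute the optimal solution of minimizing max_{j∈B} h_j²/(σ² + μ_j a_j P) subject to Σ a_j = 1, a_j ≥ 0. -/

import Mathlib

theorem blinding_weights_optimal {ι : Type*} (B : Finset ι) (hB : B.Nonempty)
    (h2 μ : ι → ℝ) (hh : ∀ j ∈ B, 0 < h2 j) (hμ : ∀ j ∈ B, 0 < μ j)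
    (σ2 P : ℝ) (hσ : 0 < σ2) (hP : 0 < P)
    (a : ι → ℝ)
    (ha : ∀ j ∈ B, a j =
      (1 + (σ2 / P) * ((∑ l ∈ B, 1 / μ l) - (1 / h2 j) * ∑ l ∈ B, h2 l / μ l)) /
        ((μ j / h2 j) * ∑ l ∈ B, h2 l / μ l))
    (hnonneg : ∀ j ∈ B, 0 ≤ a j) :
    ∀ b : ι → ℝ, (∀ j ∈ B, 0 ≤ b j) → (∑ j ∈ B, b j) = 1 →
      B.sup' hB (fun j => h2 j / (σ2 + μ j * a j * P)) ≤
        B.sup' hB (fun j => h2 j / (σ2 + μ j * b j * P)) := by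
  intro b hb hbsum
  set S1 : ℝ := ∑ l ∈ B, 1 / μ l with hS1
  set S2 : ℝ := ∑ l ∈ B, h2 l / μ l with hS2
  have hS1pos : 0 < S1 :=
    Finset.sum_pos (fun l hl => div_pos one_pos (hμ l hl)) hB
  have hS2pos : 0 < S2 :=
    Finset.sum_pos (fun l hl => div_pos (hh l hl) (hμ l hl)) hB
  have hDen : 0 < P + σ2 * S1 := by positivity
  set K : ℝ := S2 / (P + σ2 * S1) with hK
  have hKpos : 0 < K := div_pos hS2pos hDen
  -- LHS equals K
  have hLHS : B.sup' hB (fun j => h2 j / (σ2 + μ j * a j * P)) = K := by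
    have hconst : ∀ j ∈ B, h2 j / (σ2 + μ j * a j * P) = K := by
      intro j hj
      have hhj := hh j hj
      have hμj := hμ j hj
      have hd : σ2 + μ j * a j * P = h2 j * (P + σ2 * S1) / S2 := by
        rw [ha j hj]
        field_simp
        ring
      have hx : 0 < h2 j * (P + σ2 * S1) / S2 := by positivity
      rw [hd, hK, div_eq_div_iff hx.ne' hDen.ne']
      field_simp
    rw [Finset.sup'_congr hB rfl hconst]
    exact Finset.sup'_const hB K
  rw [hLHS]
  -- Now show K ≤ sup over b
  by_contra hcon
  push_neg at hcon
  rw [Finset.sup'_lt_iff] at hcon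
  have hlt : ∀ j ∈ B, (h2 j / K - σ2) / (μ j * P) < b j := by
    intro j hj
    have hh' := hh j hj
    have hμ' := hμ j hj
    have hden : 0 < σ2 + μ j * b j * P := by
      have hb' := hb j hj
      have : 0 ≤ μ j * b j * P := by positivity
      linarith
    have h1 : h2 j / (σ2 + μ j * b j * P) < K := hcon j hj
    have h2' : h2 j / K < σ2 + μ j * b j * P := by
      rw [div_lt_iff₀ hKpos]
      rw [div_lt_iff₀ hden] at h1
      nlinarith
    rw [div_lt_iff₀ (by positivity)]
    nlinarith
  have hsum : ∑ j ∈ B, (h2 j / K - σ2) / (μ j * P) < ∑ j ∈ B, b j :=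
    Finset.sum_lt_sum_of_nonempty hB hlt
  have hsumval : ∑ j ∈ B, (h2 j / K - σ2) / (μ j * P) = 1 := by
    have : ∀ j ∈ B, (h2 j / K - σ2) / (μ j * P)
        = (h2 j / μ j) * (1 / (K * P)) - (1 / μ j) * (σ2 / P) := by
      intro j hj
      have hμ' := (hμ j hj).ne'
      field_simp
    rw [Finset.sum_congr rfl this, Finset.sum_sub_distrib,
      ← Finset.sum_mul, ← Finset.sum_mul, ← hS1, ← hS2, hK]
    field_simp
    ring
  rw [hsumval, hbsum] at hsum
  exact lt_irrefl 1 hsum
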